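/- Let S = span( { e_m⊗f_0 : 0 ≤ m ≤ λ0 } ∪ { e_{λ0}⊗f_m : 0 ≤ m ≤ λ1 } ) ⊆ V ⊗ U. Then S is invariant under N⊗id and id⊗M', and every nonzero subspace of S that is invariant under both N⊗id and id⊗M' contains the vector e_{λ0}⊗f_0; that is, S is cocyclic with cocyclic vector e_{λ0}⊗f_0 for the action of the operators N⊗id and id⊗M'. -/

import Mathlib

/-- The model of `V ⊗ U` in coordinates, where `V = ℂ^{λ0+1}` with basis `e_0,…,e_{λ0}`
and `U = ℂ^{λ1+1}` with basis `f_0,…,f_{λ1}`: a vector is the function assigning to each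
basis index `(i,j)` (for `e_i ⊗ f_j`) its coefficient. -/
abbrev Tensor (l0 l1 : ℕ) : Type := Fin (l0 + 1) × Fin (l1 + 1) → ℂ

/-- The operator `N⊗id`, where `N` is the lowering shift `e_i ↦ e_{i+1}` (`e_{λ0} ↦ 0`):
the coefficient of `e_i ⊗ f_j` in `(N⊗id) v` is the coefficient of `e_{i-1} ⊗ f_j` in
`v` (zero for `i = 0`). -/
def T1 (l0 l1 : ℕ) (v : Tensor l0 l1) : Tensor l0 l1 :=
  fun p => if h : 0 < p.1.val then v (⟨p.1.val - 1, by have := p.1.isLt; omega⟩, p.2) else 0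

/-- The operator `id⊗M'`, where `M'` is the raising shift `f_i ↦ f_{i-1}` (`f_0 ↦ 0`):
the coefficient of `e_i ⊗ f_j` in `(id⊗M') v` is the coefficient of `e_i ⊗ f_{j+1}` in
`v` (zero for `j = λ1`). -/
def T2 (l0 l1 : ℕ) (v : Tensor l0 l1) : Tensor l0 l1 :=
  fun p => if h : p.2.val < l1 then v (p.1, ⟨p.2.val + 1, by omega⟩) else 0

/-- `S = span( { e_m ⊗ f_0 : 0 ≤ m ≤ λ0 } ∪ { e_{λ0} ⊗ f_m : 0 ≤ m ≤ λ1 } )`. -/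
noncomputable def Ssub (l0 l1 : ℕ) : Submodule ℂ (Tensor l0 l1) :=
  Submodule.span ℂ
    ((Set.range fun m : Fin (l0 + 1) =>
        (Pi.single (m, (0 : Fin (l1 + 1))) 1 : Tensor l0 l1)) ∪
      (Set.range fun m : Fin (l1 + 1) =>
        (Pi.single (Fin.last l0, m) 1 : Tensor l0 l1)))

def L1 (l0 l1 : ℕ) : Tensor l0 l1 →ₗ[ℂ] Tensor l0 l1 where
  toFun := T1 l0 l1
  map_add' v w := by funext p; simp only [T1, Pi.add_apply]; split_ifs <;> simp
  map_smul' c v := by funext p; simp only [T1, Pi.smul_apply, RingHom.id_apply]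
                      split_ifs <;> simp

def L2 (l0 l1 : ℕ) : Tensor l0 l1 →ₗ[ℂ] Tensor l0 l1 where
  toFun := T2 l0 l1
  map_add' v w := by funext p; simp only [T2, Pi.add_apply]; split_ifs <;> simp
  map_smul' c v := by funext p; simp only [T2, Pi.smul_apply, RingHom.id_apply]
                      split_ifs <;> simp

lemma T1_iter (l0 l1 n : ℕ) (v : Tensor l0 l1) (p : Fin (l0+1) × Fin (l1+1)) :
    (T1 l0 l1)^[n] v p =
      if h : n ≤ p.1.val then v (⟨p.1.val - n, by have := p.1.isLt; omega⟩, p.2) else 0 := by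
  induction n generalizing p with
  | zero =>
    simp only [Function.iterate_zero, id_eq, Nat.zero_le, dif_pos]
    congr 1
  | succ n ih =>
    rw [Function.iterate_succ_apply']
    simp only [T1]
    split_ifs with h1 h2 h2
    · rw [ih, dif_pos (show n ≤ ((⟨p.1.val - 1, by have := p.1.isLt; omega⟩ : Fin (l0+1)), p.2).1.val by simp; omega)]
      congr 1
      simp [Prod.ext_iff, Fin.ext_iff]
      omega
    · rw [ih, dif_neg (by simp; omega)]
    · omega
    · rfl

lemma T2_iter (l0 l1 n : ℕ) (v : Tensor l0 l1) (p : Fin (l0+1) × Fin (l1+1)) :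
    (T2 l0 l1)^[n] v p =
      if h : p.2.val + n ≤ l1 then v (p.1, ⟨p.2.val + n, by omega⟩) else 0 := by
  induction n generalizing v p with
  | zero =>
    simp only [Function.iterate_zero, id_eq, Nat.add_zero,
      dif_pos (Nat.le_of_lt_succ p.2.isLt)]
  | succ n ih =>
    rw [Function.iterate_succ_apply, ih]
    simp only [T2]
    split_ifs <;> first | rfl | (exfalso; omega)

lemma iter_mem {l0 l1 : ℕ} (f : Tensor l0 l1 → Tensor l0 l1) (W : Submodule ℂ (Tensor l0 l1))
    (hW : ∀ x ∈ W, f x ∈ W) (n : ℕ) : ∀ x ∈ W, f^[n] x ∈ W := by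
  induction n with
  | zero => intro x hx; simpa using hx
  | succ n ih => intro x hx; rw [Function.iterate_succ_apply]; exact ih _ (hW x hx)

lemma Ssub_support {l0 l1 : ℕ} {v : Tensor l0 l1} (hv : v ∈ Ssub l0 l1)
    (p : Fin (l0+1) × Fin (l1+1)) (h1 : p.1 ≠ Fin.last l0) (h2 : p.2 ≠ 0) : v p = 0 := by
  let K : Submodule ℂ (Tensor l0 l1) :=
    { carrier := {w | ∀ q : Fin (l0+1) × Fin (l1+1), q.1 ≠ Fin.last l0 → q.2 ≠ 0 → w q = 0}
      add_mem' := fun ha hb q hq1 hq2 => by simp [ha q hq1 hq2, hb q hq1 hq2]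
      zero_mem' := fun q _ _ => rfl
      smul_mem' := fun c w hw q hq1 hq2 => by simp [hw q hq1 hq2] }
  have : Ssub l0 l1 ≤ K := by
    rw [Ssub, Submodule.span_le]
    rintro x (⟨m, rfl⟩ | ⟨m, rfl⟩) <;> intro q hq1 hq2
    · show (Pi.single (m, (0:Fin (l1+1))) 1 : Tensor l0 l1) q = 0
      rw [Pi.single_apply, if_neg]; rintro rfl; exact hq2 rfl
    · show (Pi.single (Fin.last l0, m) 1 : Tensor l0 l1) q = 0
      rw [Pi.single_apply, if_neg]; rintro rfl; exact hq1 rfl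
  exact this hv p h1 h2

lemma T1_single (l0 l1 : ℕ) (q : Fin (l0+1) × Fin (l1+1)) :
    T1 l0 l1 (Pi.single q 1) =
      if h : q.1.val < l0 then (Pi.single ((⟨q.1.val + 1, by omega⟩ : Fin (l0+1)), q.2) 1 : Tensor l0 l1)
      else 0 := by
  by_cases h : q.1.val < l0
  · rw [dif_pos h]
    funext p
    simp only [T1]
    split_ifs with hp
    · rw [Pi.single_apply, Pi.single_apply]
      exact if_congr (by simp [Prod.ext_iff, Fin.ext_iff]; omega) rfl rfl
    · rw [Pi.single_apply, if_neg (by simp [Prod.ext_iff, Fin.ext_iff]; omega)]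
  · rw [dif_neg h]
    funext p
    simp only [T1, Pi.zero_apply]
    split_ifs with hp
    · rw [Pi.single_apply, if_neg (by have := p.1.isLt; simp [Prod.ext_iff, Fin.ext_iff]; omega)]
    · rfl

lemma T2_single (l0 l1 : ℕ) (q : Fin (l0+1) × Fin (l1+1)) :
    T2 l0 l1 (Pi.single q 1) =
      if h : 0 < q.2.val then
        (Pi.single (q.1, (⟨q.2.val - 1, by have := q.2.isLt; omega⟩ : Fin (l1+1))) 1 : Tensor l0 l1)
      else 0 := by
  by_cases h : 0 < q.2.val
  · rw [dif_pos h]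
    funext p
    simp only [T2]
    split_ifs with hp
    · rw [Pi.single_apply, Pi.single_apply]
      exact if_congr (by simp [Prod.ext_iff, Fin.ext_iff]; omega) rfl rfl
    · rw [Pi.single_apply, if_neg (by have := q.2.isLt; simp [Prod.ext_iff, Fin.ext_iff]; omega)]
  · rw [dif_neg h]
    funext p
    simp only [T2, Pi.zero_apply]
    split_ifs with hp
    · rw [Pi.single_apply, if_neg (by simp [Prod.ext_iff, Fin.ext_iff]; omega)]
    · rfl

/-- `S` is invariant under `N⊗id` and `id⊗M'`, and every nonzero subspace
of `S` invariant under both operators contains `e_{λ0} ⊗ f_0`; that is, `S` is cocyclic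
with cocyclic vector `e_{λ0} ⊗ f_0` for the action of these operators. -/
theorem statement15 (l0 l1 : ℕ) :
    (∀ x ∈ Ssub l0 l1, T1 l0 l1 x ∈ Ssub l0 l1) ∧
    (∀ x ∈ Ssub l0 l1, T2 l0 l1 x ∈ Ssub l0 l1) ∧
    (∀ W : Submodule ℂ (Tensor l0 l1), W ≤ Ssub l0 l1 → W ≠ ⊥ →
      (∀ x ∈ W, T1 l0 l1 x ∈ W) → (∀ x ∈ W, T2 l0 l1 x ∈ W) →
      (Pi.single (Fin.last l0, (0 : Fin (l1 + 1))) 1 : Tensor l0 l1) ∈ W) := by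
  classical
  refine ⟨?_, ?_, ?_⟩
  · -- T1-invariance of S
    intro x hx
    have : Ssub l0 l1 ≤ (Ssub l0 l1).comap (L1 l0 l1) := by
      refine (Submodule.span_le).2 ?_
      rintro y (⟨m, rfl⟩ | ⟨m, rfl⟩) <;>
        refine Submodule.mem_comap.2 ?_
      · show T1 l0 l1 (Pi.single (m, (0 : Fin (l1+1))) 1) ∈ Ssub l0 l1
        rw [T1_single]
        split_ifs with h
        · exact Submodule.subset_span (Or.inl ⟨⟨m.val + 1, Nat.succ_lt_succ h⟩, rfl⟩)
        · exact (Ssub l0 l1).zero_mem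
      · show T1 l0 l1 (Pi.single (Fin.last l0, m) 1) ∈ Ssub l0 l1
        rw [T1_single]
        split_ifs with h
        · simp [Fin.last] at h
        · exact (Ssub l0 l1).zero_mem
    exact this hx
  · -- T2-invariance of S
    intro x hx
    have : Ssub l0 l1 ≤ (Ssub l0 l1).comap (L2 l0 l1) := by
      refine (Submodule.span_le).2 ?_
      rintro y (⟨m, rfl⟩ | ⟨m, rfl⟩) <;>
        refine Submodule.mem_comap.2 ?_
      · show T2 l0 l1 (Pi.single (m, (0 : Fin (l1+1))) 1) ∈ Ssub l0 l1
        rw [T2_single]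
        split_ifs with h
        · simp at h
        · exact (Ssub l0 l1).zero_mem
      · show T2 l0 l1 (Pi.single (Fin.last l0, m) 1) ∈ Ssub l0 l1
        rw [T2_single]
        split_ifs with h
        · exact Submodule.subset_span (Or.inr ⟨⟨m.val - 1, by have := m.isLt; omega⟩, rfl⟩)
        · exact (Ssub l0 l1).zero_mem
    exact this hx
  · -- cocyclicity
    intro W hWS hWne hW1 hW2
    obtain ⟨w, hwW, hw0⟩ := Submodule.exists_mem_ne_zero_of_ne_bot hWne
    have hwS : w ∈ Ssub l0 l1 := hWS hwW
    by_cases hA : ∃ j : Fin (l1+1), 0 < j.val ∧ w (Fin.last l0, j) ≠ 0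
    · -- Case A: nonzero entry in the last row away from column 0
      obtain ⟨j, hj1, hj2, hmax⟩ :
          ∃ j : Fin (l1+1), 0 < j.val ∧ w (Fin.last l0, j) ≠ 0 ∧
            ∀ j' : Fin (l1+1), j.val < j'.val → w (Fin.last l0, j') = 0 := by
        let J := Finset.univ.filter (fun j : Fin (l1+1) => 0 < j.val ∧ w (Fin.last l0, j) ≠ 0)
        have hJ : J.Nonempty := by
          obtain ⟨j, hj1, hj2⟩ := hA
          exact ⟨j, Finset.mem_filter.2 ⟨Finset.mem_univ _, hj1, hj2⟩⟩
        refine ⟨J.max' hJ, (Finset.mem_filter.1 (J.max'_mem hJ)).2.1,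
          (Finset.mem_filter.1 (J.max'_mem hJ)).2.2, ?_⟩
        intro j' hlt
        by_contra h0
        have hmem : j' ∈ J := Finset.mem_filter.2 ⟨Finset.mem_univ _, by omega, h0⟩
        have := J.le_max' j' hmem
        rw [Fin.le_def] at this
        omega
      have key : (T2 l0 l1)^[j.val] w =
          w (Fin.last l0, j) • (Pi.single (Fin.last l0, (0 : Fin (l1+1))) 1 : Tensor l0 l1) := by
        funext p
        rw [T2_iter, Pi.smul_apply, Pi.single_apply]
        by_cases hp : p = (Fin.last l0, (0 : Fin (l1+1)))
        · subst hp
          have hc : (((Fin.last l0, (0 : Fin (l1+1)))).2).val + j.val ≤ l1 := by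
            simpa using Nat.lt_succ_iff.mp j.isLt
          rw [if_pos rfl, dif_pos hc, smul_eq_mul, mul_one]
          congr 1
          simp [Prod.ext_iff, Fin.ext_iff]
        · rw [if_neg hp, smul_zero]
          split_ifs with h
          · by_cases hp1 : p.1 = Fin.last l0
            · have hp2 : p.2 ≠ 0 := by
                intro h2; exact hp (by rw [← hp1, ← h2])
              have : j.val < ((⟨p.2.val + j.val, by omega⟩ : Fin (l1+1))).val := by
                show j.val < p.2.val + j.val; have : p.2.val ≠ 0 := fun hc => hp2 (Fin.ext hc); omega
              rw [hp1]
              exact hmax _ this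
            · refine Ssub_support hwS _ hp1 ?_
              intro hc
              have : p.2.val + j.val = 0 := by have h' := congrArg Fin.val hc; simp only [Fin.val_zero] at h'; exact h'
              omega
          · rfl
      have hmem : (T2 l0 l1)^[j.val] w ∈ W := iter_mem _ W hW2 _ w hwW
      rw [key] at hmem
      have := W.smul_mem (w (Fin.last l0, j))⁻¹ hmem
      rwa [smul_smul, inv_mul_cancel₀ hj2, one_smul] at this
    · -- Case B: supported on column 0
      push_neg at hA
      have hcol : ∀ p : Fin (l0+1) × Fin (l1+1), p.2 ≠ 0 → w p = 0 := by
        intro p hp2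
        by_cases hp1 : p.1 = Fin.last l0
        · have : 0 < p.2.val := Nat.pos_of_ne_zero (fun hc => hp2 (Fin.ext hc))
          have := hA p.2 this
          rw [← hp1] at this
          simpa using this
        · exact Ssub_support hwS p hp1 hp2
      obtain ⟨p0, hp0⟩ : ∃ p, w p ≠ 0 := by
        by_contra h
        push_neg at h
        exact hw0 (funext h)
      have hp02 : w (p0.1, 0) ≠ 0 := by
        by_cases h : p0.2 = 0
        · rw [← h]; simpa using hp0
        · exact absurd (hcol p0 h) hp0
      obtain ⟨i, hi, hmin⟩ :
          ∃ i : Fin (l0+1), w (i, 0) ≠ 0 ∧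
            ∀ i' : Fin (l0+1), i'.val < i.val → w (i', 0) = 0 := by
        let I := Finset.univ.filter (fun i : Fin (l0+1) => w (i, 0) ≠ 0)
        have hI : I.Nonempty := ⟨p0.1, by simp [I, hp02]⟩
        refine ⟨I.min' hI, (Finset.mem_filter.1 (I.min'_mem hI)).2, ?_⟩
        intro i' hlt
        by_contra h0
        have hmem : i' ∈ I := Finset.mem_filter.2 ⟨Finset.mem_univ _, h0⟩
        have := I.min'_le i' hmem
        rw [Fin.le_def] at this
        omega
      have key : (T1 l0 l1)^[l0 - i.val] w =
          w (i, 0) • (Pi.single (Fin.last l0, (0 : Fin (l1+1))) 1 : Tensor l0 l1) := by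
        funext p
        rw [T1_iter, Pi.smul_apply, Pi.single_apply]
        by_cases hp : p = (Fin.last l0, (0 : Fin (l1+1)))
        · subst hp
          have hc : l0 - i.val ≤ (((Fin.last l0, (0 : Fin (l1+1)))).1).val := by
            simp [Fin.last]
          rw [if_pos rfl, dif_pos hc, smul_eq_mul, mul_one]
          congr 1
          have := i.isLt
          simp [Prod.ext_iff, Fin.ext_iff, Fin.last]
          omega
        · rw [if_neg hp, smul_zero]
          split_ifs with h
          · by_cases hp2 : p.2 = 0
            · have hp1 : p.1 ≠ Fin.last l0 := by
                intro hc; exact hp (by rw [← hc, ← hp2])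
              have hp1v : p.1.val < l0 := by
                have := p.1.isLt
                have : p.1.val ≠ l0 := fun hc => hp1 (Fin.ext (by simpa [Fin.last] using hc))
                omega
              rw [hp2]
              exact hmin _ (by simp; omega)
            · exact hcol _ hp2
          · rfl
      have hmem : (T1 l0 l1)^[l0 - i.val] w ∈ W := iter_mem _ W hW1 _ w hwW
      rw [key] at hmem
      have := W.smul_mem (w (i, 0))⁻¹ hmem
      rwa [smul_smul, inv_mul_cancel₀ hi, one_smul] at this
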